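/- Assume 0 < m < 1, 1 < r < 2/m, c > 0, and let p < q be coprime positive integers. Let γ_s < γ_w in (0,1) both satisfy (a + b*γ + a*γ^2)^q = γ^{q-p}. Let φ : ℤ → ℝ satisfy (G^{(q)} φ)_i = φ_{i-p} for all i, and suppose there are integers 0 = i_0 ≤ i_1 ≤ … ≤ i_q = p and a constant K > 0 such that for each t ∈ {0, …, q-1}: (G^{(t)} φ)_i = 1 for all i ≤ i_t, 0 < (G^{(t)} φ)_i ≤ K*γ_s^{i - i_t} for all i > i_t, and μ(G^{(t)} φ)_i ≠ c for all i ∈ ℤ. Define the linear operator L = S^{(p)} ∘ J_{G^{(q-1)} φ} ∘ ⋯ ∘ J_{G^{(1)} φ} ∘ J_φ on functions η : ℤ → ℂ. Then there exists γ̄ ∈ (0,1) such that for every λ ∈ ℂ with |λ| ≥ 1, any η : ℤ → ℂ satisfying L η = λ η, sup_{i ≤ 0} |η_i| < ∞ and sup_{i > 0} |η_i|*γ̄^{-i} < ∞ must be identically zero. That is, the linearization of S^{(p)} ∘ G^{(q)} about the locked front has no eigenvalue of modulus at least one in the exponentially weighted space X_γ̄. -/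

import Mathlib

/-- The post-migration values `μ(u)_i = (m/2) u_{i-1} + (1-m) u_i + (m/2) u_{i+1}`. -/
noncomputable def mu (m : ℝ) (u : ℤ → ℝ) : ℤ → ℝ :=
  fun i => m / 2 * u (i - 1) + (1 - m) * u i + m / 2 * u (i + 1)

/-- The piecewise linear reproduction function `g(u) = r u` for `u < c`, `g(u) = 1` for `u ≥ c`. -/
noncomputable def g (r c u : ℝ) : ℝ := if u < c then r * u else 1

/-- The generational map `G`: migration followed by reproduction. -/
noncomputable def G (r c m : ℝ) (u : ℤ → ℝ) : ℤ → ℝ :=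
  fun i => g r c (mu m u i)

/-- The linearization `J_u` of `G` at a state `u` with `μ(u)_i ≠ c` for all `i`:
`(J_u η)_i = r ((m/2) η_{i-1} + (1-m) η_i + (m/2) η_{i+1})` when `μ(u)_i < c`, and
`(J_u η)_i = 0` when `μ(u)_i > c`. -/
noncomputable def J (r c m : ℝ) (u : ℤ → ℝ) (η : ℤ → ℂ) : ℤ → ℂ :=
  fun i =>
    if mu m u i < c then
      (r : ℂ) * (((m : ℂ) / 2) * η (i - 1) + (1 - (m : ℂ)) * η i + ((m : ℂ) / 2) * η (i + 1))
    else 0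

/-- The composition `J_{G^{(t-1)} φ} ∘ ⋯ ∘ J_{G^{(1)} φ} ∘ J_φ`. -/
noncomputable def Jchain (r c m : ℝ) (φ : ℤ → ℝ) : ℕ → (ℤ → ℂ) → (ℤ → ℂ)
  | 0 => fun η => η
  | t + 1 => fun η => J r c m ((G r c m)^[t] φ) (Jchain r c m φ t η)

/-- The linearization `L = S^{(p)} ∘ J_{G^{(q-1)} φ} ∘ ⋯ ∘ J_φ` of `S^{(p)} ∘ G^{(q)}` at `φ`. -/
noncomputable def L (r c m : ℝ) (p q : ℕ) (φ : ℤ → ℝ) (η : ℤ → ℂ) : ℤ → ℂ :=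
  fun i => Jchain r c m φ q η (i + p)

set_option maxHeartbeats 1000000 in
theorem stmt_18 (r m c : ℝ) (hm0 : 0 < m) (hm1 : m < 1) (hr1 : 1 < r) (hr2 : r < 2 / m)
    (hc : 0 < c)
    (p q : ℕ) (hp : 0 < p) (hpq : p < q) (hcop : Nat.Coprime p q)
    (γs γw : ℝ) (hγs : γs ∈ Set.Ioo (0 : ℝ) 1) (hγw : γw ∈ Set.Ioo (0 : ℝ) 1)
    (hsw : γs < γw)
    (heqs : (r * m / 2 + r * (1 - m) * γs + r * m / 2 * γs ^ 2) ^ q = γs ^ (q - p))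
    (heqw : (r * m / 2 + r * (1 - m) * γw + r * m / 2 * γw ^ 2) ^ q = γw ^ (q - p))
    (φ : ℤ → ℝ)
    (hfront : ∀ i : ℤ, (G r c m)^[q] φ i = φ (i - p))
    (idx : ℕ → ℤ) (hidx0 : idx 0 = 0) (hidxq : idx q = p)
    (hidxmono : ∀ t : ℕ, t < q → idx t ≤ idx (t + 1))
    (K : ℝ) (hK : 0 < K)
    (hcap : ∀ t : ℕ, t < q → ∀ i : ℤ, i ≤ idx t → (G r c m)^[t] φ i = 1)
    (htail : ∀ t : ℕ, t < q → ∀ i : ℤ, idx t < i →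
      0 < (G r c m)^[t] φ i ∧ (G r c m)^[t] φ i ≤ K * γs ^ (i - idx t))
    (hnc : ∀ t : ℕ, t < q → ∀ i : ℤ, mu m ((G r c m)^[t] φ) i ≠ c) :
    ∃ γbar ∈ Set.Ioo (0 : ℝ) 1,
      ∀ lam : ℂ, 1 ≤ ‖lam‖ →
        ∀ η : ℤ → ℂ,
          (∀ i : ℤ, L r c m p q φ η i = lam * η i) →
          (∃ C₁ : ℝ, ∀ i : ℤ, i ≤ 0 → ‖η i‖ ≤ C₁) →
          (∃ C₂ : ℝ, ∀ i : ℤ, 0 < i → ‖η i‖ * γbar ^ (-i) ≤ C₂) →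
          ∀ i : ℤ, η i = 0 := by
  obtain ⟨hγs0, hγs1⟩ := hγs
  obtain ⟨hγw0, hγw1⟩ := hγw
  have hr0 : 0 < r := by linarith
  have h1m : 0 < 1 - m := by linarith
  have hq0 : q ≠ 0 := by omega
  -- the geometric mean
  set γ : ℝ := Real.sqrt (γs * γw) with hγdef
  have hγ0 : 0 < γ := Real.sqrt_pos.mpr (mul_pos hγs0 hγw0)
  have hγsq : γ ^ 2 = γs * γw := Real.sq_sqrt (mul_pos hγs0 hγw0).le
  have hγ1 : γ < 1 := by nlinarith [hγsq]
  have hne : γ ≠ 0 := ne_of_gt hγ0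
  -- strict Cauchy-Schwarz for the symbol at the geometric mean
  have hmean : γs + γw ≥ 2 * γ := by
    have h1 : Real.sqrt γs * Real.sqrt γw = γ := by
      rw [hγdef, Real.sqrt_mul hγs0.le]
    nlinarith [sq_nonneg (Real.sqrt γs - Real.sqrt γw), Real.sq_sqrt hγs0.le,
      Real.sq_sqrt hγw0.le]
  have ha : 0 < r * m / 2 := by
    have := mul_pos hr0 hm0; linarith
  have hb : 0 < r * (1 - m) := mul_pos hr0 h1m
  have hT1 : 0 ≤ r * m / 2 * (r * (1 - m)) * (γs + γw - 2 * γ) :=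
    mul_nonneg (mul_nonneg ha.le hb.le) (by linarith)
  have hT2 : 0 ≤ r * m / 2 * (r * (1 - m)) * (γs * γw) * (γs + γw - 2 * γ) :=
    mul_nonneg (mul_nonneg (mul_nonneg ha.le hb.le) (mul_pos hγs0 hγw0).le) (by linarith)
  have hT3 : 0 < (r * m / 2) ^ 2 * (γs - γw) ^ 2 := by
    have h := sub_pos.mpr hsw
    nlinarith [mul_pos h h, mul_pos ha ha]
  have hident : (r * m / 2 + r * (1 - m) * γs + r * m / 2 * γs ^ 2) *
        (r * m / 2 + r * (1 - m) * γw + r * m / 2 * γw ^ 2) -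
        (r * m / 2 + r * (1 - m) * γ + r * m / 2 * γ ^ 2) ^ 2 =
      r * m / 2 * (r * (1 - m)) * (γs + γw - 2 * γ) +
        r * m / 2 * (r * (1 - m)) * (γs * γw) * (γs + γw - 2 * γ) +
        (r * m / 2) ^ 2 * (γs - γw) ^ 2 := by
    linear_combination (-((r * (1 - m)) ^ 2 + (r * m / 2) ^ 2 * (γ ^ 2 + γs * γw) +
      2 * (r * m / 2) * (r * (1 - m)) * γ + 2 * (r * m / 2) ^ 2)) * hγsq
  have hH2 : (r * m / 2 + r * (1 - m) * γ + r * m / 2 * γ ^ 2) ^ 2 <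
      (r * m / 2 + r * (1 - m) * γs + r * m / 2 * γs ^ 2) *
        (r * m / 2 + r * (1 - m) * γw + r * m / 2 * γw ^ 2) := by
    linarith
  have hHγpos : 0 < r * m / 2 + r * (1 - m) * γ + r * m / 2 * γ ^ 2 := by
    have t2 := mul_pos hb hγ0
    have t3 := mul_pos ha (pow_pos hγ0 2)
    linarith
  have hkey : (r * m / 2 + r * (1 - m) * γ + r * m / 2 * γ ^ 2) ^ q < γ ^ (q - p) := by
    have h2q : ((r * m / 2 + r * (1 - m) * γ + r * m / 2 * γ ^ 2) ^ q) ^ 2 <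
        (γ ^ (q - p)) ^ 2 := by
      calc ((r * m / 2 + r * (1 - m) * γ + r * m / 2 * γ ^ 2) ^ q) ^ 2
          = ((r * m / 2 + r * (1 - m) * γ + r * m / 2 * γ ^ 2) ^ 2) ^ q := by
            rw [← pow_mul, ← pow_mul, Nat.mul_comm]
        _ < ((r * m / 2 + r * (1 - m) * γs + r * m / 2 * γs ^ 2) *
              (r * m / 2 + r * (1 - m) * γw + r * m / 2 * γw ^ 2)) ^ q :=
            pow_lt_pow_left₀ hH2 (sq_nonneg _) hq0
        _ = (r * m / 2 + r * (1 - m) * γs + r * m / 2 * γs ^ 2) ^ q *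
              (r * m / 2 + r * (1 - m) * γw + r * m / 2 * γw ^ 2) ^ q := mul_pow _ _ _
        _ = γs ^ (q - p) * γw ^ (q - p) := by rw [heqs, heqw]
        _ = (γs * γw) ^ (q - p) := (mul_pow _ _ _).symm
        _ = (γ ^ 2) ^ (q - p) := by rw [hγsq]
        _ = (γ ^ (q - p)) ^ 2 := by rw [← pow_mul, ← pow_mul, Nat.mul_comm]
    exact lt_of_pow_lt_pow_left₀ 2 (pow_nonneg hγ0.le _) h2q
  -- the contraction rate
  set ρ : ℝ := r * (m / 2 * γ⁻¹ + (1 - m) + m / 2 * γ) with hρdef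
  have hργ : ρ * γ = r * m / 2 + r * (1 - m) * γ + r * m / 2 * γ ^ 2 := by
    rw [hρdef]; field_simp
  have hρpos : 0 < ρ := by
    have h : 0 < ρ * γ := by rw [hργ]; exact hHγpos
    rcases mul_pos_iff.mp h with ⟨h1, _⟩ | ⟨_, h2⟩
    · exact h1
    · linarith
  set θ : ℝ := ρ ^ q * γ ^ p with hθdef
  have hθpos : 0 < θ := mul_pos (pow_pos hρpos q) (pow_pos hγ0 p)
  have hθ1 : θ < 1 := by
    have hX : 0 < γ ^ (q - p) := pow_pos hγ0 _
    have e : θ * γ ^ (q - p) = (ρ * γ) ^ q := by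
      rw [hθdef, mul_assoc, ← pow_add, Nat.add_sub_cancel' hpq.le, ← mul_pow]
    have h2 : θ * γ ^ (q - p) < 1 * γ ^ (q - p) := by
      rw [e, one_mul, hργ]; exact hkey
    exact lt_of_mul_lt_mul_right h2 hX.le
  refine ⟨γ, ⟨hγ0, hγ1⟩, ?_⟩
  rintro lam hlam η heig ⟨C₁, hC₁⟩ ⟨C₂, hC₂⟩
  -- lower/upper weight facts
  have hzpos : ∀ i : ℤ, (0:ℝ) < γ ^ i := fun i => zpow_pos hγ0 i
  have hzle : ∀ i : ℤ, i ≤ 0 → 1 ≤ γ ^ i := by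
    intro i hi
    obtain ⟨k, hk⟩ : ∃ k : ℕ, -i = (k : ℤ) :=
      ⟨(-i).toNat, (Int.toNat_of_nonneg (by omega)).symm⟩
    have h1 : γ ^ i = (γ ^ k)⁻¹ := by
      rw [← zpow_natCast γ k, ← hk, zpow_neg, inv_inv]
    rw [h1]
    exact one_le_inv₀ (pow_pos hγ0 k) |>.mpr (pow_le_one₀ hγ0.le hγ1.le)
  -- the set of weighted bounds
  set S : Set ℝ := {M : ℝ | 0 ≤ M ∧ ∀ i : ℤ, ‖η i‖ ≤ M * γ ^ i} with hSdef
  have hSne : S.Nonempty := by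
    refine ⟨max (max C₁ C₂) 0, le_max_right _ _, fun i => ?_⟩
    rcases le_or_gt i 0 with hi | hi
    · have h1 := hC₁ i hi
      have h2 : max (max C₁ C₂) 0 ≤ max (max C₁ C₂) 0 * γ ^ i := by
        nlinarith [hzle i hi, le_max_right (max C₁ C₂) (0:ℝ)]
      have h3 : C₁ ≤ max (max C₁ C₂) 0 := le_trans (le_max_left _ _) (le_max_left _ _)
      linarith
    · have h1 := hC₂ i hi
      have h2 : ‖η i‖ ≤ C₂ * γ ^ i := by
        have hprod : γ ^ (-i) * γ ^ i = 1 := by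
          rw [← zpow_add₀ hne]; simp
        calc ‖η i‖ = ‖η i‖ * γ ^ (-i) * γ ^ i := by
              rw [mul_assoc, hprod, mul_one]
          _ ≤ C₂ * γ ^ i := mul_le_mul_of_nonneg_right h1 (hzpos i).le
      have h3 : C₂ ≤ max (max C₁ C₂) 0 := le_trans (le_max_right _ _) (le_max_left _ _)
      calc ‖η i‖ ≤ C₂ * γ ^ i := h2
        _ ≤ max (max C₁ C₂) 0 * γ ^ i := mul_le_mul_of_nonneg_right h3 (hzpos i).le
  have hSbdd : BddBelow S := ⟨0, fun x hx => hx.1⟩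
  set M : ℝ := sInf S with hMdef
  have hM0 : 0 ≤ M := le_csInf hSne fun b hb => hb.1
  have hbound : ∀ i : ℤ, ‖η i‖ ≤ M * γ ^ i := by
    intro i
    have hp' := hzpos i
    have h : ‖η i‖ / γ ^ i ≤ M :=
      le_csInf hSne fun b hb => (div_le_iff₀ hp').mpr (hb.2 i)
    rwa [div_le_iff₀ hp'] at h
  -- the chain estimate
  have hchain : ∀ t : ℕ, ∀ j : ℤ, ‖Jchain r c m φ t η j‖ ≤ M * ρ ^ t * γ ^ j := by
    intro t
    induction t with
    | zero => intro j; simpa [Jchain] using hbound j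
    | succ t ih =>
      intro j
      have hj1 := ih (j - 1)
      have hj0 := ih j
      have hj2 := ih (j + 1)
      have hMρ : 0 ≤ M * ρ ^ t := mul_nonneg hM0 (pow_pos hρpos t).le
      show ‖J r c m ((G r c m)^[t] φ) (Jchain r c m φ t η) j‖ ≤ _
      rw [J]
      split_ifs with h
      · set x := Jchain r c m φ t η (j - 1) with hx
        set y := Jchain r c m φ t η j with hy
        set z := Jchain r c m φ t η (j + 1) with hz
        have hm2 : ((m : ℂ) / 2) = ((m / 2 : ℝ) : ℂ) := by push_cast; ring
        have hm3 : (1 - (m : ℂ)) = (((1 - m : ℝ)) : ℂ) := by push_cast; ring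
        have e1 : ‖(r : ℂ) * (((m : ℂ) / 2) * x + (1 - (m : ℂ)) * y +
            ((m : ℂ) / 2) * z)‖ ≤
            r * (m / 2 * ‖x‖ + (1 - m) * ‖y‖ + m / 2 * ‖z‖) := by
          rw [norm_mul, Complex.norm_real, Real.norm_eq_abs, abs_of_pos hr0]
          have t1 : ‖((m : ℂ) / 2) * x + (1 - (m : ℂ)) * y + ((m : ℂ) / 2) * z‖ ≤
              ‖((m : ℂ) / 2) * x + (1 - (m : ℂ)) * y‖ +
                ‖((m : ℂ) / 2) * z‖ := norm_add_le _ _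
          have t2 : ‖((m : ℂ) / 2) * x + (1 - (m : ℂ)) * y‖ ≤
              ‖((m : ℂ) / 2) * x‖ + ‖(1 - (m : ℂ)) * y‖ :=
            norm_add_le _ _
          have u1 : ‖((m : ℂ) / 2) * x‖ = m / 2 * ‖x‖ := by
            rw [hm2, norm_mul, Complex.norm_real, Real.norm_eq_abs, abs_of_pos (by linarith : (0:ℝ) < m / 2)]
          have u2 : ‖(1 - (m : ℂ)) * y‖ = (1 - m) * ‖y‖ := by
            rw [hm3, norm_mul, Complex.norm_real, Real.norm_eq_abs, abs_of_pos h1m]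
          have u3 : ‖((m : ℂ) / 2) * z‖ = m / 2 * ‖z‖ := by
            rw [hm2, norm_mul, Complex.norm_real, Real.norm_eq_abs, abs_of_pos (by linarith : (0:ℝ) < m / 2)]
          have := le_trans t1 (by linarith [t2, u1.le, u2.le, u3.le] :
            ‖((m : ℂ) / 2) * x + (1 - (m : ℂ)) * y‖ +
              ‖((m : ℂ) / 2) * z‖ ≤
            m / 2 * ‖x‖ + (1 - m) * ‖y‖ + m / 2 * ‖z‖)
          exact mul_le_mul_of_nonneg_left this hr0.le
        have e2 : r * (m / 2 * ‖x‖ + (1 - m) * ‖y‖ +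
            m / 2 * ‖z‖) ≤
            r * (m / 2 * (M * ρ ^ t * γ ^ (j - 1)) + (1 - m) * (M * ρ ^ t * γ ^ j) +
              m / 2 * (M * ρ ^ t * γ ^ (j + 1))) := by
          have c1 : (0:ℝ) ≤ m / 2 := by linarith
          gcongr
        have e3 : r * (m / 2 * (M * ρ ^ t * γ ^ (j - 1)) + (1 - m) * (M * ρ ^ t * γ ^ j) +
            m / 2 * (M * ρ ^ t * γ ^ (j + 1))) = M * ρ ^ (t + 1) * γ ^ j := by
          have hz1 : γ ^ (j - 1) = γ ^ j * γ⁻¹ := by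
            rw [zpow_sub₀ hne, zpow_one]; ring
          have hz2 : γ ^ (j + 1) = γ ^ j * γ := by
            rw [zpow_add₀ hne, zpow_one]
          rw [hz1, hz2, hρdef]; ring
        calc ‖(r : ℂ) * (((m : ℂ) / 2) * x + (1 - (m : ℂ)) * y +
              ((m : ℂ) / 2) * z)‖ ≤ _ := e1
          _ ≤ _ := e2
          _ = M * ρ ^ (t + 1) * γ ^ j := e3
      · have : (0:ℝ) ≤ M * ρ ^ (t + 1) * γ ^ j :=
          mul_nonneg (mul_nonneg hM0 (pow_pos hρpos (t + 1)).le) (hzpos j).le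
        simpa using this
  -- conclude: θ * M is also in S
  have hmem : θ * M ∈ S := by
    refine ⟨mul_nonneg hθpos.le hM0, fun i => ?_⟩
    have h1 : Jchain r c m φ q η (i + (p : ℤ)) = lam * η i := heig i
    have h2 : ‖η i‖ ≤ ‖lam * η i‖ := by
      rw [norm_mul]
      exact le_mul_of_one_le_left (norm_nonneg _) hlam
    have h3 : ‖lam * η i‖ ≤ M * ρ ^ q * γ ^ (i + (p : ℤ)) := by
      rw [← h1]; exact hchain q (i + (p : ℤ))
    have h4 : γ ^ (i + (p : ℤ)) = γ ^ i * γ ^ p := by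
      rw [zpow_add₀ hne, zpow_natCast]
    have h5 : M * ρ ^ q * γ ^ (i + (p : ℤ)) = θ * M * γ ^ i := by
      rw [h4, hθdef]; ring
    linarith [h2, h3, h5.le, h5.ge]
  have hMle : M ≤ θ * M := csInf_le hSbdd hmem
  have hMzero : M ≤ 0 := by nlinarith
  intro i
  have h1 := hbound i
  have h2 : M * γ ^ i ≤ 0 := mul_nonpos_of_nonpos_of_nonneg hMzero (hzpos i).le
  have h3 : ‖η i‖ = 0 := le_antisymm (by linarith) (norm_nonneg _)
  exact norm_eq_zero.mp h3
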